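/- arXiv:2012.05420 — 3 statements merged into one kernel-verified Lean document; each statement's English description precedes it below -/
import Mathlib

section
/- The function Φ_j(z) = log(∑_{i=1}^k exp(z_i)) − z_j is strictly convex on any hyperplane H_α = {z ∈ ℝ^k : ∑_{i=1}^k z_i = α}; i.e., for distinct z, w ∈ H_α and t ∈ (0,1), Φ_j(t·z + (1−t)·w) < t·Φ_j(z) + (1−t)·Φ_j(w). -/
open Real Finset

lemma young_strict {x y t : ℝ} (hx : 0 < x) (hy : 0 < y) (hxy : x ≠ y)
    (ht0 : 0 < t) (ht1 : t < 1) : x ^ t * y ^ (1 - t) < t * x + (1 - t) * y := by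
  have h := strictConcaveOn_log_Ioi.2 (Set.mem_Ioi.2 hx) (Set.mem_Ioi.2 hy) hxy ht0
    (show (0:ℝ) < 1 - t by linarith) (by ring)
  have hpos : 0 < t * x + (1 - t) * y :=
    add_pos (mul_pos ht0 hx) (mul_pos (by linarith) hy)
  calc x ^ t * y ^ (1 - t) = Real.exp (t * Real.log x + (1 - t) * Real.log y) := by
        rw [Real.exp_add, Real.rpow_def_of_pos hx, Real.rpow_def_of_pos hy]; ring_nf
    _ < Real.exp (Real.log (t * x + (1 - t) * y)) := by
        apply Real.exp_lt_exp.2; simpa [smul_eq_mul] using h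
    _ = t * x + (1 - t) * y := Real.exp_log hpos

lemma young_le {x y t : ℝ} (hx : 0 < x) (hy : 0 < y)
    (ht0 : 0 < t) (ht1 : t < 1) : x ^ t * y ^ (1 - t) ≤ t * x + (1 - t) * y := by
  rcases eq_or_ne x y with rfl | hne
  · rw [← Real.rpow_add hx]
    norm_num
    nlinarith [hx.le]
  · exact (young_strict hx hy hne ht0 ht1).le

/-- `Φ_j` is strictly convex on every hyperplane `H_α = {z : ∑ i, z i = α}`. -/
theorem softmax_cross_entropy_strictly_convex_on_hyperplane (k : ℕ) (j : Fin k) (α : ℝ)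
    (z w : Fin k → ℝ) (hz : ∑ i, z i = α) (hw : ∑ i, w i = α) (hzw : z ≠ w)
    (t : ℝ) (ht0 : 0 < t) (ht1 : t < 1) :
    Real.log (∑ i, Real.exp (t * z i + (1 - t) * w i)) - (t * z j + (1 - t) * w j)
      < t * (Real.log (∑ i, Real.exp (z i)) - z j)
        + (1 - t) * (Real.log (∑ i, Real.exp (w i)) - w j) := by
  set Sa := ∑ i, Real.exp (z i) with hSa_def
  set Sb := ∑ i, Real.exp (w i) with hSb_def
  have hSa : 0 < Sa := Finset.sum_pos (fun i _ => Real.exp_pos _) ⟨j, Finset.mem_univ j⟩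
  have hSb : 0 < Sb := Finset.sum_pos (fun i _ => Real.exp_pos _) ⟨j, Finset.mem_univ j⟩
  -- There is an index where the softmax values differ
  have hex : ∃ i : Fin k, Real.exp (z i) / Sa ≠ Real.exp (w i) / Sb := by
    by_contra hcon
    push_neg at hcon
    have hc : ∀ i, z i - w i = Real.log Sa - Real.log Sb := by
      intro i
      have h1 : Real.exp (z i) * Sb = Real.exp (w i) * Sa := by
        have := hcon i; field_simp at this; linarith [this]
      have h2 : Real.log (Real.exp (z i) * Sb) = Real.log (Real.exp (w i) * Sa) := by rw [h1]
      rw [Real.log_mul (Real.exp_ne_zero _) hSb.ne', Real.log_mul (Real.exp_ne_zero _) hSa.ne',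
        Real.log_exp, Real.log_exp] at h2
      linarith
    have hsum : ∑ i, (z i - w i) = 0 := by rw [Finset.sum_sub_distrib, hz, hw]; ring
    have hk : (0:ℝ) < (k:ℝ) := by exact_mod_cast j.pos
    have : (k:ℝ) * (Real.log Sa - Real.log Sb) = 0 := by
      rw [← hsum]; simp [hc, Finset.sum_const, mul_comm]; ring
    have hc0 : Real.log Sa - Real.log Sb = 0 := by
      rcases mul_eq_zero.1 this with h | h
      · exact absurd h hk.ne'
      · exact h
    apply hzw
    funext i
    have := hc i
    rw [hc0] at this
    linarith
  obtain ⟨i0, hi0⟩ := hex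
  -- key Hölder-type strict inequality
  have key : ∑ i, Real.exp (t * z i + (1 - t) * w i) < Sa ^ t * Sb ^ (1 - t) := by
    have hterm : ∀ i : Fin k, Real.exp (t * z i + (1 - t) * w i)
        = Sa ^ t * Sb ^ (1 - t) *
          ((Real.exp (z i) / Sa) ^ t * (Real.exp (w i) / Sb) ^ (1 - t)) := by
      intro i
      rw [Real.div_rpow (Real.exp_pos _).le hSa.le, Real.div_rpow (Real.exp_pos _).le hSb.le,
        Real.exp_add]
      have hza : Real.exp (t * z i) = Real.exp (z i) ^ t := by
        rw [Real.rpow_def_of_pos (Real.exp_pos _), Real.log_exp]; ring_nf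
      have hwb : Real.exp ((1 - t) * w i) = Real.exp (w i) ^ (1 - t) := by
        rw [Real.rpow_def_of_pos (Real.exp_pos _), Real.log_exp]; ring_nf
      rw [hza, hwb]
      field_simp
    have hC : 0 < Sa ^ t * Sb ^ (1 - t) := by positivity
    calc ∑ i, Real.exp (t * z i + (1 - t) * w i)
        = ∑ i, Sa ^ t * Sb ^ (1 - t) *
            ((Real.exp (z i) / Sa) ^ t * (Real.exp (w i) / Sb) ^ (1 - t)) := by
          exact Finset.sum_congr rfl fun i _ => hterm i
      _ < ∑ i, Sa ^ t * Sb ^ (1 - t) *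
            (t * (Real.exp (z i) / Sa) + (1 - t) * (Real.exp (w i) / Sb)) := by
          apply Finset.sum_lt_sum
          · intro i _
            exact mul_le_mul_of_nonneg_left
              (young_le (by positivity) (by positivity) ht0 ht1) hC.le
          · exact ⟨i0, Finset.mem_univ i0, mul_lt_mul_of_pos_left
              (young_strict (by positivity) (by positivity) hi0 ht0 ht1) hC⟩
      _ = Sa ^ t * Sb ^ (1 - t) := by
          rw [← Finset.mul_sum]
          have : ∑ i, (t * (Real.exp (z i) / Sa) + (1 - t) * (Real.exp (w i) / Sb))
              = t * (Sa / Sa) + (1 - t) * (Sb / Sb) := by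
            rw [Finset.sum_add_distrib, ← Finset.mul_sum, ← Finset.mul_sum,
              ← Finset.sum_div, ← Finset.sum_div]
          rw [this, div_self hSa.ne', div_self hSb.ne']
          ring
  have hsumpos : 0 < ∑ i, Real.exp (t * z i + (1 - t) * w i) :=
    Finset.sum_pos (fun i _ => Real.exp_pos _) ⟨j, Finset.mem_univ j⟩
  have hlog := Real.log_lt_log hsumpos key
  rw [Real.log_mul (by positivity) (by positivity), Real.log_rpow hSa, Real.log_rpow hSb] at hlog
  linarith
end

section
/- Fix R > 0, k ≥ 2, and i ∈ {1,...,k}. The function Φ_i(z) = log(∑_{j=1}^k exp(z_j)) − z_i attains a unique minimum over the closed Euclidean ball {z ∈ ℝ^k : ‖z‖_2 ≤ R}, and the minimizer z* has the form z* = α·e_i + β·∑_{j≠i} e_j for some real numbers α, β. -/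
set_option maxHeartbeats 1000000


/-- `Φ_i` has a unique minimizer over the closed Euclidean ball of radius `R`, and the
minimizer has all coordinates other than the `i`-th equal. -/
theorem softmax_unique_minimizer_on_ball (k : ℕ) (hk : 2 ≤ k) (R : ℝ) (hR : 0 < R)
    (i : Fin k) :
    ∃ z : EuclideanSpace ℝ (Fin k), ‖z‖ ≤ R ∧
      (∀ w : EuclideanSpace ℝ (Fin k), ‖w‖ ≤ R →
        Real.log (∑ j, Real.exp (z j)) - z i ≤ Real.log (∑ j, Real.exp (w j)) - w i) ∧
      (∀ w : EuclideanSpace ℝ (Fin k), ‖w‖ ≤ R →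
        (∀ v : EuclideanSpace ℝ (Fin k), ‖v‖ ≤ R →
          Real.log (∑ j, Real.exp (w j)) - w i ≤ Real.log (∑ j, Real.exp (v j)) - v i) →
        w = z) ∧
      ∃ α β : ℝ, ∀ j, z j = if j = i then α else β := by
  have hk2 : (2:ℝ) ≤ (k:ℝ) := by exact_mod_cast hk
  have hkpos : (0:ℝ) < (k:ℝ) := by linarith
  have hk1pos : (0:ℝ) < (k:ℝ) - 1 := by linarith
  have hkne : (k:ℝ) ≠ 0 := ne_of_gt hkpos
  have hk1ne : (k:ℝ) - 1 ≠ 0 := ne_of_gt hk1pos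
  obtain ⟨α, hαdef⟩ : ∃ a : ℝ, a = R * Real.sqrt (((k:ℝ)-1)/k) := ⟨_, rfl⟩
  have hfrac_pos : 0 < ((k:ℝ)-1)/k := div_pos hk1pos hkpos
  have hαpos : 0 < α := hαdef ▸ mul_pos hR (Real.sqrt_pos.mpr hfrac_pos)
  obtain ⟨β, hβdef⟩ : ∃ b : ℝ, b = -α / ((k:ℝ)-1) := ⟨_, rfl⟩
  have hβneg : β < 0 := hβdef ▸ div_neg_of_neg_of_pos (neg_neg_of_pos hαpos) hk1pos
  have hβne : β ≠ 0 := ne_of_lt hβneg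
  have hsum0 : α + ((k:ℝ)-1) * β = 0 := by
    rw [hβdef]; field_simp; ring
  have hαsq : α^2 = R^2 * (((k:ℝ)-1)/k) := by
    rw [hαdef, mul_pow, Real.sq_sqrt hfrac_pos.le]
  have hβsq : β^2 = α^2/((k:ℝ)-1)^2 := by rw [hβdef, div_pow, neg_sq]
  have hsq : α^2 + ((k:ℝ)-1)*β^2 = R^2 := by
    have h2 : (k:ℝ) * α^2 = ((k:ℝ)-1) * R^2 := by
      rw [hαsq]; field_simp [hkne]
    have h4 : ((k:ℝ)-1)^2 * β^2 = α^2 := by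
      rw [hβsq]; field_simp [hk1ne]
    have h5 : (k:ℝ)*((k:ℝ)-1)*(α^2 + ((k:ℝ)-1)*β^2) = (k:ℝ)*((k:ℝ)-1)*R^2 := by
      linear_combination (k:ℝ) * h2 + (k:ℝ) * h4
    exact mul_left_cancel₀ (mul_pos hkpos hk1pos).ne' h5
  -- the candidate minimizer
  obtain ⟨z, hzdef⟩ : ∃ z : EuclideanSpace ℝ (Fin k),
      z = (fun j => if j = i then α else β) := ⟨WithLp.toLp 2 _, rfl⟩
  have hzj : ∀ j, z j = if j = i then α else β := fun j => by rw [hzdef]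
  -- sum splitting
  have hcard : (Finset.univ.erase i).card = k - 1 := by
    rw [Finset.card_erase_of_mem (Finset.mem_univ i), Finset.card_univ, Fintype.card_fin]
  have hsum_ite : ∀ a b : ℝ, (∑ j : Fin k, (if j = i then a else b)) = a + ((k:ℝ)-1) * b := by
    intro a b
    rw [← Finset.add_sum_erase _ _ (Finset.mem_univ i), if_pos rfl]
    congr 1
    rw [Finset.sum_congr rfl (fun j hj => if_neg (Finset.ne_of_mem_erase hj)),
      Finset.sum_const, hcard, nsmul_eq_mul]
    congr 1
    have h1k : (1:ℕ) ≤ k := le_trans one_le_two hk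
    rw [Nat.cast_sub h1k, Nat.cast_one]
  have hsum_f : ∀ f : ℝ → ℝ, ∑ j, f (z j) = f α + ((k:ℝ)-1) * f β := by
    intro f
    have h : ∀ j, f (z j) = if j = i then f α else f β := by
      intro j; rw [hzj j]; split <;> rfl
    simp_rw [h]; exact hsum_ite _ _
  have hzsum_sq : ∑ j, (z j)^2 = R^2 := by
    have := hsum_f (fun x => x^2); simpa [hsq] using this
  have hznorm : ‖z‖ = R := by
    rw [EuclideanSpace.norm_eq]
    simp only [Real.norm_eq_abs, sq_abs]
    rw [hzsum_sq, Real.sqrt_sq hR.le]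
  have hzsum : ∑ j, z j = 0 := by
    have := hsum_f id; simp only [id] at this; rw [this, hsum0]
  -- softmax quantities
  obtain ⟨S, hSdef⟩ : ∃ s : ℝ, s = ∑ j, Real.exp (z j) := ⟨_, rfl⟩
  have hS : S = Real.exp α + ((k:ℝ)-1) * Real.exp β := by rw [hSdef]; exact hsum_f Real.exp
  have hSpos : 0 < S := by
    rw [hSdef]
    exact Finset.sum_pos (fun j _ => Real.exp_pos _) ⟨i, Finset.mem_univ i⟩
  have hSne : S ≠ 0 := ne_of_gt hSpos
  obtain ⟨lam, hlamdef⟩ : ∃ l : ℝ, l = Real.exp β / (S * β) := ⟨_, rfl⟩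
  have hlam : lam < 0 := hlamdef ▸
    div_neg_of_pos_of_neg (Real.exp_pos _) (mul_neg_of_pos_of_neg hSpos hβneg)
  have hgrad : ∀ j, Real.exp (z j) / S - lam * z j = if j = i then 1 else 0 := by
    intro j
    rw [hzj j]
    rcases eq_or_ne j i with h | h
    · simp only [h, if_pos rfl, ↓reduceIte]
      rw [hlamdef]
      field_simp
      linear_combination (-β) * hS + (-Real.exp β) * hsum0
    · simp only [h, if_neg h, ↓reduceIte]
      rw [hlamdef]
      field_simp
      ring
  -- key comparison lemma
  have key : ∀ w : EuclideanSpace ℝ (Fin k), ‖w‖ ≤ R →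
      (Real.log S - α ≤ Real.log (∑ j, Real.exp (w j)) - w i) ∧
      (Real.log (∑ j, Real.exp (w j)) - w i ≤ Real.log S - α → w = z) := by
    intro w hw
    obtain ⟨d, hddef⟩ : ∃ d : Fin k → ℝ, d = fun j => w j - z j := ⟨_, rfl⟩
    have hdj : ∀ j, d j = w j - z j := fun j => by rw [hddef]
    obtain ⟨m, hmdef⟩ : ∃ m : ℝ, m = ∑ j, Real.exp (z j)/S * d j := ⟨_, rfl⟩
    have hpsum : ∑ j, Real.exp (z j)/S = 1 := by
      rw [← Finset.sum_div, ← hSdef, div_self hSne]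
    obtain ⟨T, hTdef⟩ : ∃ t : ℝ, t = ∑ j, Real.exp (z j)/S * Real.exp (d j) := ⟨_, rfl⟩
    have hTpos : 0 < T := by
      rw [hTdef]
      exact Finset.sum_pos
        (fun j _ => mul_pos (div_pos (Real.exp_pos _) hSpos) (Real.exp_pos _))
        ⟨i, Finset.mem_univ i⟩
    have hwsum : ∑ j, Real.exp (w j) = S * T := by
      rw [hTdef, Finset.mul_sum]
      refine Finset.sum_congr rfl fun j _ => ?_
      have hzd : z j + d j = w j := by rw [hdj j]; ring
      rw [← hzd, Real.exp_add]
      field_simp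
    have hΦw : Real.log (∑ j, Real.exp (w j)) - w i
        = (Real.log S - α) + (Real.log T - d i) := by
      rw [hwsum, Real.log_mul hSne (ne_of_gt hTpos)]
      have hwi : w i = α + d i := by
        rw [hdj i, hzj i, if_pos rfl]; ring
      rw [hwi]; ring
    have hsplit : ∑ j, Real.exp (z j)/S * (1 + (d j - m)) = 1 := by
      have h : ∀ j, Real.exp (z j)/S * (1 + (d j - m))
          = Real.exp (z j)/S + Real.exp (z j)/S * d j - Real.exp (z j)/S * m :=
        fun j => by ring
      simp_rw [h]
      rw [Finset.sum_sub_distrib, Finset.sum_add_distrib, hpsum, ← hmdef,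
        ← Finset.sum_mul, hpsum, one_mul]
      ring
    have hTfac : T = Real.exp m * ∑ j, Real.exp (z j)/S * Real.exp (d j - m) := by
      rw [hTdef, Finset.mul_sum]
      refine Finset.sum_congr rfl fun j _ => ?_
      rw [Real.exp_sub]
      field_simp [Real.exp_ne_zero]
    have hjensen : (1:ℝ) ≤ ∑ j, Real.exp (z j)/S * Real.exp (d j - m) := by
      rw [← hsplit]
      refine Finset.sum_le_sum fun j _ => ?_
      refine mul_le_mul_of_nonneg_left ?_ (le_of_lt (div_pos (Real.exp_pos _) hSpos))
      have := Real.add_one_le_exp (d j - m)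
      linarith
    have hT_ge : Real.exp m ≤ T := by
      rw [hTfac]
      calc Real.exp m = Real.exp m * 1 := (mul_one _).symm
        _ ≤ _ := mul_le_mul_of_nonneg_left hjensen (Real.exp_pos m).le
    have hlogT : m ≤ Real.log T := (Real.le_log_iff_exp_le hTpos).mpr hT_ge
    have hdi : d i = m - lam * ∑ j, z j * d j := by
      have h : ∀ j, (if j = i then (1:ℝ) else 0) * d j
          = Real.exp (z j)/S * d j - lam * (z j * d j) := by
        intro j; rw [← hgrad j]; ring
      have h2 : ∑ j, (if j = i then (1:ℝ) else 0) * d j = d i := by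
        rw [Finset.sum_eq_single i]
        · rw [if_pos rfl, one_mul]
        · intro b _ hb; rw [if_neg hb, zero_mul]
        · intro hb; exact absurd (Finset.mem_univ i) hb
      rw [← h2]
      simp_rw [h]
      rw [Finset.sum_sub_distrib, ← hmdef, ← Finset.mul_sum]
    have hinner : ∑ j, z j * d j ≤ 0 := by
      have hzw : ∑ j, z j * w j ≤ R^2 := by
        have h1 : (inner ℝ z w : ℝ) ≤ ‖z‖ * ‖w‖ := real_inner_le_norm z w
        have h2 : (inner ℝ z w : ℝ) = ∑ j, z j * w j := by
          rw [PiLp.inner_apply]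
          exact Finset.sum_congr rfl fun j _ => by simp [RCLike.inner_apply, mul_comm]
        rw [h2, hznorm] at h1
        have h4 : R * ‖w‖ ≤ R * R := mul_le_mul_of_nonneg_left hw hR.le
        calc ∑ j, z j * w j ≤ R * ‖w‖ := h1
          _ ≤ R * R := h4
          _ = R^2 := (sq R).symm
      have h3 : ∑ j, z j * d j = ∑ j, z j * w j - ∑ j, (z j)^2 := by
        rw [← Finset.sum_sub_distrib]
        refine Finset.sum_congr rfl fun j _ => by rw [hdj j]; ring
      rw [h3, hzsum_sq]; linarith
    have hdim : d i ≤ m := by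
      rw [hdi]
      have h4 : 0 ≤ lam * ∑ j, z j * d j := by
        have h5 := mul_nonneg (neg_nonneg.2 hlam.le) (neg_nonneg.2 hinner)
        rwa [neg_mul_neg] at h5
      linarith
    constructor
    · rw [hΦw]; linarith
    · intro hle
      rw [hΦw] at hle
      have heq1 : Real.log T = m := le_antisymm (by linarith) hlogT
      have heq2 : T = Real.exp m := by
        rw [← heq1, Real.exp_log hTpos]
      have heqsum : ∑ j, Real.exp (z j)/S * Real.exp (d j - m) = 1 := by
        have h5 : Real.exp m * (∑ j, Real.exp (z j)/S * Real.exp (d j - m))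
            = Real.exp m * 1 := by
          rw [mul_one, ← hTfac, heq2]
        exact mul_left_cancel₀ (Real.exp_ne_zero m) h5
      have hall : ∀ j, d j = m := by
        by_contra hcon
        push_neg at hcon
        obtain ⟨j0, hj0⟩ := hcon
        have hstrict : (1:ℝ) < ∑ j, Real.exp (z j)/S * Real.exp (d j - m) := by
          rw [← hsplit]
          refine Finset.sum_lt_sum (fun j _ => ?_) ⟨j0, Finset.mem_univ j0, ?_⟩
          · refine mul_le_mul_of_nonneg_left ?_ (le_of_lt (div_pos (Real.exp_pos _) hSpos))
            have := Real.add_one_le_exp (d j - m)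
            linarith
          · refine mul_lt_mul_of_pos_left ?_ (div_pos (Real.exp_pos _) hSpos)
            have hne : d j0 - m ≠ 0 := sub_ne_zero.mpr hj0
            have := Real.add_one_lt_exp hne
            linarith
        rw [heqsum] at hstrict
        exact lt_irrefl _ hstrict
      have hwz : ∀ j, w j = z j + m := by
        intro j
        have h6 := hall j
        rw [hdj j] at h6
        linarith
      have hwnormsq : ∑ j, (w j)^2 = R^2 + (k:ℝ) * m^2 := by
        have h : ∀ j, (w j)^2 = (z j)^2 + 2 * m * z j + m^2 := by
          intro j; rw [hwz j]; ring
        simp_rw [h]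
        rw [Finset.sum_add_distrib, Finset.sum_add_distrib, hzsum_sq, ← Finset.mul_sum,
          hzsum, Finset.sum_const, Finset.card_univ, Fintype.card_fin, nsmul_eq_mul]
        ring
      have hwle : ∑ j, (w j)^2 ≤ R^2 := by
        have h1 : ‖w‖^2 ≤ R^2 := pow_le_pow_left₀ (norm_nonneg w) hw 2
        have h2 : ‖w‖^2 = ∑ j, (w j)^2 := by
          rw [EuclideanSpace.norm_eq]
          simp only [Real.norm_eq_abs, sq_abs]
          rw [Real.sq_sqrt (Finset.sum_nonneg fun j _ => sq_nonneg _)]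
        rw [← h2]
        exact h1
      have hm0 : m = 0 := by
        rw [hwnormsq] at hwle
        have h7 : (k:ℝ) * m^2 ≤ 0 := by linarith
        have h8 : m^2 ≤ 0 := by
          have h10 := div_nonpos_of_nonpos_of_nonneg h7 hkpos.le
          rwa [mul_div_cancel_left₀ _ hkne] at h10
        have h9 : m^2 = 0 := le_antisymm h8 (sq_nonneg m)
        exact pow_eq_zero_iff two_ne_zero |>.mp h9

      ext j
      rw [hwz j, hm0, add_zero]
  refine ⟨z, le_of_eq hznorm, ?_, ?_, α, β, hzj⟩
  · intro w hw
    have h := (key w hw).1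
    rw [← hSdef, hzj i, if_pos rfl]
    exact h
  · intro w hw hmin
    have h := hmin z (le_of_eq hznorm)
    rw [← hSdef, hzj i, if_pos rfl] at h
    exact (key w hw).2 h
end

section
/- Any minimizer z of Φ_i(z) = log(∑_{j=1}^k exp(z_j)) − z_i over the closed Euclidean ball of radius R > 0 satisfies ‖z‖_2 = R and ∑_{j=1}^k z_j = 0. -/
lemma softmax_perturb (k : ℕ) (hk : 2 ≤ k) (i : Fin k) (w : EuclideanSpace ℝ (Fin k))
    {t : ℝ} (ht : 0 < t) :
    Real.log (∑ j, Real.exp ((w + EuclideanSpace.single i t) j))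
        - (w + EuclideanSpace.single i t) i
      < Real.log (∑ j, Real.exp (w j)) - w i := by
  haveI : Nontrivial (Fin k) := Fin.nontrivial_iff_two_le.mpr hk
  have happ : ∀ j, (w + EuclideanSpace.single i t) j = w j + if j = i then t else 0 := by
    intro j; simp [EuclideanSpace.single_apply]
  have hS : 0 < ∑ j, Real.exp (w j) :=
    Finset.sum_pos (fun j _ => Real.exp_pos _) ⟨i, Finset.mem_univ i⟩
  have hS' : 0 < ∑ j, Real.exp ((w + EuclideanSpace.single i t) j) :=
    Finset.sum_pos (fun j _ => Real.exp_pos _) ⟨i, Finset.mem_univ i⟩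
  have hlt : ∑ j, Real.exp ((w + EuclideanSpace.single i t) j)
      < Real.exp t * ∑ j, Real.exp (w j) := by
    rw [Finset.mul_sum]
    apply Finset.sum_lt_sum
    · intro j _
      rw [happ]
      split_ifs with h
      · rw [Real.exp_add]; ring_nf; exact le_rfl
      · rw [add_zero]
        have h1 : (1:ℝ) < Real.exp t := by nlinarith [Real.add_one_le_exp t]
        nlinarith [Real.exp_pos (w j)]
    · obtain ⟨j, hj⟩ := exists_ne i
      refine ⟨j, Finset.mem_univ j, ?_⟩
      rw [happ, if_neg hj, add_zero]
      have h1 : (1:ℝ) < Real.exp t := by nlinarith [Real.add_one_le_exp t]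
      nlinarith [Real.exp_pos (w j)]
  have hlog : Real.log (∑ j, Real.exp ((w + EuclideanSpace.single i t) j))
      < t + Real.log (∑ j, Real.exp (w j)) := by
    have := Real.log_lt_log hS' hlt
    rwa [Real.log_mul (Real.exp_pos t).ne' hS.ne', Real.log_exp] at this
  have hi : (w + EuclideanSpace.single i t) i = w i + t := by rw [happ, if_pos rfl]
  rw [hi]; linarith

/-- Any minimizer of `Φ_i` over the closed Euclidean ball of radius `R > 0` lies on the
boundary sphere and in the hyperplane of coordinate-sum zero. -/
theorem softmax_minimizer_on_sphere_and_hyperplane (k : ℕ) (hk : 2 ≤ k) (R : ℝ) (hR : 0 < R)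
    (i : Fin k) (z : EuclideanSpace ℝ (Fin k)) (hz : ‖z‖ ≤ R)
    (hmin : ∀ w : EuclideanSpace ℝ (Fin k), ‖w‖ ≤ R →
      Real.log (∑ j, Real.exp (z j)) - z i ≤ Real.log (∑ j, Real.exp (w j)) - w i) :
    ‖z‖ = R ∧ ∑ j, z j = 0 := by
  -- general fact: no point of norm < R can have minimal value
  have key : ∀ w : EuclideanSpace ℝ (Fin k), ‖w‖ < R →
      ¬ (Real.log (∑ j, Real.exp (w j)) - w i
          ≤ Real.log (∑ j, Real.exp (z j)) - z i) := by
    intro w hw hle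
    set t := R - ‖w‖ with hts
    have ht : 0 < t := by simp [hts]; linarith
    have hnorm : ‖w + EuclideanSpace.single i t‖ ≤ R := by
      calc ‖w + EuclideanSpace.single i t‖ ≤ ‖w‖ + ‖EuclideanSpace.single i t‖ := norm_add_le _ _
        _ = ‖w‖ + |t| := by rw [EuclideanSpace.norm_single]; rfl
        _ = R := by rw [abs_of_pos ht]; simp [hts]
    have := hmin _ hnorm
    have := softmax_perturb k hk i w ht
    linarith
  constructor
  · by_contra h
    exact key z (lt_of_le_of_ne hz h) (le_refl _)
  · by_contra hs
    set s := ∑ j, z j with hss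
    set c := s / k with hcs
    set w0 : EuclideanSpace ℝ (Fin k) := WithLp.toLp 2 (fun j => z j - c) with hw0
    have hk0 : (0:ℝ) < k := by positivity
    have happ : ∀ j, w0 j = z j - c := fun j => rfl
    -- norm of w0
    have hnorm2 : ∑ j, (w0 j)^2 = (∑ j, (z j)^2) - s^2 / k := by
      simp only [happ]
      have : ∀ j ∈ Finset.univ, (z j - c)^2 = (z j)^2 - 2*c*(z j) + c^2 := by intros; ring
      rw [Finset.sum_congr rfl this, Finset.sum_add_distrib, Finset.sum_sub_distrib]
      rw [← Finset.mul_sum, Finset.sum_const, Finset.card_univ, Fintype.card_fin, ← hss]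
      rw [hcs, nsmul_eq_mul]; field_simp; ring
    have hzn : ∑ j, (z j)^2 ≤ R^2 := by
      have h1 : ‖z‖^2 ≤ R^2 := by nlinarith [norm_nonneg z]
      rw [EuclideanSpace.norm_eq] at h1
      rw [Real.sq_sqrt (Finset.sum_nonneg fun j _ => sq_nonneg _)] at h1
      have h2 : ∀ j ∈ Finset.univ, ‖z j‖^2 = (z j)^2 := by
        intro j _; rw [Real.norm_eq_abs, sq_abs]
      rwa [Finset.sum_congr rfl h2] at h1
    have hspos : 0 < s^2 / k := by positivity
    have hw0lt : ‖w0‖ < R := by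
      rw [EuclideanSpace.norm_eq]
      rw [Real.sqrt_lt' hR]
      have : ∀ j ∈ Finset.univ, ‖w0 j‖^2 = (w0 j)^2 := by
        intro j _; rw [Real.norm_eq_abs, sq_abs]
      rw [Finset.sum_congr rfl this, hnorm2]
      linarith
    have hval : Real.log (∑ j, Real.exp (w0 j)) - w0 i
        = Real.log (∑ j, Real.exp (z j)) - z i := by
      have hsum : ∑ j, Real.exp (w0 j) = (∑ j, Real.exp (z j)) / Real.exp c := by
        rw [Finset.sum_div]
        exact Finset.sum_congr rfl fun j _ => by rw [happ, Real.exp_sub]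
      have hSz : 0 < ∑ j, Real.exp (z j) :=
        Finset.sum_pos (fun j _ => Real.exp_pos _) ⟨i, Finset.mem_univ i⟩
      rw [hsum, Real.log_div hSz.ne' (Real.exp_pos c).ne', Real.log_exp, happ]
      ring
    exact key w0 hw0lt hval.le
end
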